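/- Let A ∈ GL(2,Q) not be a scalar multiple of the identity. Then the linear map L_A on 2×2 rational matrices given by P ↦ A^t P A - (det A)·P has rank 2, and its kernel is the 2-dimensional span of [[0,1],[-1,0]] and [[-c, a-d],[0, b]] where A = [[a,b],[c,d]]. Moreover the subspace of symmetric matrices in ker L_A is exactly 1-dimensional. -/

import Mathlib

/-- Let `A ∈ GL(2,ℚ)` not be a rational scalar multiple of the identity. Then the kernel of
`L_A : P ↦ Aᵀ P A - (det A) P` is the 2-dimensional span of `[[0,1],[-1,0]]` and
`[[-c, a-d],[0,b]]` (so `L_A` has rank 2), and the subspace of symmetric matrices in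
`ker L_A` is exactly 1-dimensional. -/
theorem stmt18 (A : Matrix (Fin 2) (Fin 2) ℚ) (hA : A.det ≠ 0)
    (hns : ∀ q : ℚ, A ≠ q • (1 : Matrix (Fin 2) (Fin 2) ℚ)) :
    ({P : Matrix (Fin 2) (Fin 2) ℚ | A.transpose * P * A = A.det • P} =
      ↑(Submodule.span ℚ
        ({!![0, 1; -1, 0], !![-(A 1 0), A 0 0 - A 1 1; 0, A 0 1]} :
          Set (Matrix (Fin 2) (Fin 2) ℚ)))) ∧
    Module.rank ℚ
      ↥(Submodule.span ℚ
        ({!![0, 1; -1, 0], !![-(A 1 0), A 0 0 - A 1 1; 0, A 0 1]} :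
          Set (Matrix (Fin 2) (Fin 2) ℚ))) = 2 ∧
    Module.rank ℚ
      ↥(Submodule.span ℚ
        {P : Matrix (Fin 2) (Fin 2) ℚ | A.transpose * P * A = A.det • P ∧ P.transpose = P})
      = 1 := by
  set J : Matrix (Fin 2) (Fin 2) ℚ := !![0, 1; -1, 0] with hJ
  set K : Matrix (Fin 2) (Fin 2) ℚ := !![-(A 1 0), A 0 0 - A 1 1; 0, A 0 1] with hK
  have hD : A 0 0 * A 1 1 - A 0 1 * A 1 0 ≠ 0 := by
    rwa [Matrix.det_fin_two] at hA
  -- A is not scalar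
  have hscal : ¬(A 0 1 = 0 ∧ A 1 0 = 0 ∧ A 0 0 = A 1 1) := by
    rintro ⟨hb, hc, had⟩
    exact hns (A 0 0) (by ext i j; fin_cases i <;> fin_cases j <;>
      simp [Matrix.one_apply, hb, hc, had])
  -- Part 1
  have hpart1 : ({P : Matrix (Fin 2) (Fin 2) ℚ | A.transpose * P * A = A.det • P} =
      ↑(Submodule.span ℚ ({J, K} : Set (Matrix (Fin 2) (Fin 2) ℚ)))) := by
    ext P
    constructor
    · intro h
      have h00 := congrFun (congrFun h 0) 0
      have h01 := congrFun (congrFun h 0) 1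
      have h11 := congrFun (congrFun h 1) 1
      simp only [Matrix.mul_apply, Fin.sum_univ_two, Matrix.det_fin_two, Matrix.smul_apply,
        smul_eq_mul, Matrix.transpose_apply] at h00 h01 h11
      have r2 : A 0 1 * P 0 0 + A 1 0 * P 1 1 = 0 := by
        apply mul_left_cancel₀ hD
        linear_combination (-(A 0 1)) * h00 + (A 0 0) * h01
      have r1 : (A 0 0 - A 1 1) * P 0 0 + A 1 0 * (P 0 1 + P 1 0) = 0 := by
        apply mul_left_cancel₀ hD
        linear_combination (A 1 1) * h00 - (A 1 0) * h01
      have r3 : A 0 1 * (P 0 1 + P 1 0) - (A 0 0 - A 1 1) * P 1 1 = 0 := by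
        apply mul_left_cancel₀ hD
        linear_combination (-(A 0 1)) * h01 + (A 0 0) * h11
      rw [SetLike.mem_coe, Submodule.mem_span_pair]
      by_cases hc : A 1 0 ≠ 0
      · refine ⟨-P 1 0, -P 0 0 / A 1 0, ?_⟩
        rw [← Matrix.ext_iff]
        simp only [hJ, hK, Fin.forall_fin_two, Matrix.add_apply, Matrix.smul_apply,
          smul_eq_mul, Matrix.cons_val', Matrix.cons_val_zero, Matrix.cons_val_one,
          Matrix.head_cons, Matrix.head_fin_const, Matrix.empty_val',
          Matrix.cons_val_fin_one, Matrix.of_apply]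
        refine ⟨⟨?_, ?_⟩, ?_, ?_⟩ <;> field_simp <;>
          first
            | linear_combination -r1
            | linear_combination -r2
            | ring
      · push_neg at hc
        by_cases hb : A 0 1 ≠ 0
        · have hp : P 0 0 = 0 := by
            have h' : A 0 1 * P 0 0 = 0 := by rw [hc] at r2; linarith
            rcases mul_eq_zero.mp h' with h'' | h''
            · exact absurd h'' hb
            · exact h''
          refine ⟨-P 1 0, P 1 1 / A 0 1, ?_⟩
          rw [← Matrix.ext_iff]
          simp only [hJ, hK, Fin.forall_fin_two, Matrix.add_apply, Matrix.smul_apply,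
            smul_eq_mul, Matrix.cons_val', Matrix.cons_val_zero, Matrix.cons_val_one,
            Matrix.head_cons, Matrix.head_fin_const, Matrix.empty_val',
            Matrix.cons_val_fin_one, Matrix.of_apply]
          refine ⟨⟨?_, ?_⟩, ?_, ?_⟩ <;> field_simp [hc] <;>
            first
              | exact hp.symm
              | linear_combination -r3
              | linear_combination -P 1 1 * hc - A 0 1 * hp
              | ring
        · push_neg at hb
          have had : A 0 0 - A 1 1 ≠ 0 := by
            intro h0
            exact hscal ⟨hb, hc, by linarith⟩
          have hp : P 0 0 = 0 := by
            have h' : (A 0 0 - A 1 1) * P 0 0 = 0 := by rw [hc] at r1; linarith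
            rcases mul_eq_zero.mp h' with h'' | h''
            · exact absurd h'' had
            · exact h''
          have hs : P 1 1 = 0 := by
            have h' : (A 0 0 - A 1 1) * P 1 1 = 0 := by rw [hb] at r3; linarith
            rcases mul_eq_zero.mp h' with h'' | h''
            · exact absurd h'' had
            · exact h''
          refine ⟨-P 1 0, (P 0 1 + P 1 0) / (A 0 0 - A 1 1), ?_⟩
          rw [← Matrix.ext_iff]
          simp only [hJ, hK, Fin.forall_fin_two, Matrix.add_apply, Matrix.smul_apply,
            smul_eq_mul, Matrix.cons_val', Matrix.cons_val_zero, Matrix.cons_val_one,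
            Matrix.head_cons, Matrix.head_fin_const, Matrix.empty_val',
            Matrix.cons_val_fin_one, Matrix.of_apply]
          refine ⟨⟨?_, ?_⟩, ?_, ?_⟩ <;> field_simp [hb, hc] <;>
            first
              | exact hp.symm
              | exact hs.symm
              | linear_combination -(P 0 1 + P 1 0) * hc - (A 0 0 - A 1 1) * hp
              | linear_combination (P 0 1 + P 1 0) * hb - (A 0 0 - A 1 1) * hs
              | ring
    · intro h
      rw [SetLike.mem_coe, Submodule.mem_span_pair] at h
      obtain ⟨x, y, rfl⟩ := h
      show _ = _
      rw [← Matrix.ext_iff]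
      simp only [hJ, hK, Fin.forall_fin_two, Matrix.mul_apply, Fin.sum_univ_two,
        Matrix.det_fin_two, Matrix.smul_apply, smul_eq_mul, Matrix.transpose_apply,
        Matrix.add_apply, Matrix.cons_val', Matrix.cons_val_zero, Matrix.cons_val_one,
        Matrix.head_cons, Matrix.head_fin_const, Matrix.empty_val',
        Matrix.cons_val_fin_one, Matrix.of_apply]
      refine ⟨⟨?_, ?_⟩, ?_, ?_⟩ <;> ring
  -- Part 2
  have hrange : ({J, K} : Set (Matrix (Fin 2) (Fin 2) ℚ)) = Set.range ![J, K] := by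
    ext x
    simp only [Set.mem_insert_iff, Set.mem_singleton_iff, Set.mem_range,
      Fin.exists_fin_two, Matrix.cons_val_zero, Matrix.cons_val_one, Matrix.head_cons]
    tauto
  have hli : LinearIndependent ℚ ![J, K] := by
    rw [LinearIndependent.pair_iff]
    intro s t hst
    have e10 := congrFun (congrFun hst 1) 0
    have e00 := congrFun (congrFun hst 0) 0
    have e01 := congrFun (congrFun hst 0) 1
    have e11 := congrFun (congrFun hst 1) 1
    simp only [hJ, hK, Matrix.add_apply, Matrix.smul_apply, smul_eq_mul,
      Matrix.cons_val', Matrix.cons_val_zero, Matrix.cons_val_one, Matrix.head_cons,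
      Matrix.head_fin_const, Matrix.empty_val', Matrix.cons_val_fin_one,
      Matrix.of_apply, Matrix.zero_apply] at e10 e00 e01 e11
    have hs : s = 0 := by linarith
    refine ⟨hs, ?_⟩
    by_contra ht
    rw [hs] at e00 e01 e11
    apply hscal
    refine ⟨?_, ?_, ?_⟩
    · rcases mul_eq_zero.mp (show t * A 0 1 = 0 by linarith) with h | h
      · exact absurd h ht
      · exact h
    · rcases mul_eq_zero.mp (show t * A 1 0 = 0 by linarith) with h | h
      · exact absurd h ht
      · exact h
    · have : t * (A 0 0 - A 1 1) = 0 := by linarith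
      rcases mul_eq_zero.mp this with h | h
      · exact absurd h ht
      · linarith
  have hpart2 : Module.rank ℚ
      ↥(Submodule.span ℚ ({J, K} : Set (Matrix (Fin 2) (Fin 2) ℚ))) = 2 := by
    rw [hrange, ← Module.finrank_eq_rank, finrank_span_eq_card hli]
    simp
  -- Part 3
  set M : Matrix (Fin 2) (Fin 2) ℚ :=
    !![-(2 * A 1 0), A 0 0 - A 1 1; A 0 0 - A 1 1, 2 * A 0 1] with hM
  have hM0 : M ≠ 0 := by
    intro h0
    have e00 := congrFun (congrFun h0 0) 0
    have e01 := congrFun (congrFun h0 0) 1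
    have e11 := congrFun (congrFun h0 1) 1
    simp only [hM, Matrix.cons_val', Matrix.cons_val_zero, Matrix.cons_val_one,
      Matrix.head_cons, Matrix.head_fin_const, Matrix.empty_val', Matrix.cons_val_fin_one,
      Matrix.of_apply, Matrix.zero_apply] at e00 e01 e11
    exact hscal ⟨by linarith, by linarith, by linarith⟩
  have hset3 : ({P : Matrix (Fin 2) (Fin 2) ℚ |
      A.transpose * P * A = A.det • P ∧ P.transpose = P} : Set (Matrix (Fin 2) (Fin 2) ℚ)) =
      ↑(Submodule.span ℚ ({M} : Set (Matrix (Fin 2) (Fin 2) ℚ))) := by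
    ext P
    constructor
    · rintro ⟨hcond, hsym⟩
      have hmem : P ∈ Submodule.span ℚ ({J, K} : Set (Matrix (Fin 2) (Fin 2) ℚ)) := by
        have : P ∈ ({P : Matrix (Fin 2) (Fin 2) ℚ | A.transpose * P * A = A.det • P}) := hcond
        rw [hpart1] at this
        exact this
      obtain ⟨x, y, hxy⟩ := Submodule.mem_span_pair.mp hmem
      have hq := congrFun (congrFun hxy 0) 1
      have hr := congrFun (congrFun hxy 1) 0
      have hp := congrFun (congrFun hxy 0) 0
      have hs := congrFun (congrFun hxy 1) 1
      simp only [hJ, hK, Matrix.add_apply, Matrix.smul_apply, smul_eq_mul,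
        Matrix.cons_val', Matrix.cons_val_zero, Matrix.cons_val_one, Matrix.head_cons,
        Matrix.head_fin_const, Matrix.empty_val', Matrix.cons_val_fin_one,
        Matrix.of_apply] at hq hr hp hs
      have hsym01 := congrFun (congrFun hsym 0) 1
      simp only [Matrix.transpose_apply] at hsym01
      -- 2x + y(a-d) = 0
      have hx : 2 * x + y * (A 0 0 - A 1 1) = 0 := by
        have : P 1 0 = P 0 1 := hsym01
        linarith [hq, hr]
      rw [SetLike.mem_coe, Submodule.mem_span_singleton]
      refine ⟨y / 2, ?_⟩
      rw [← Matrix.ext_iff]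
      simp only [hM, Fin.forall_fin_two, Matrix.smul_apply, smul_eq_mul, Matrix.cons_val',
        Matrix.cons_val_zero, Matrix.cons_val_one, Matrix.head_cons,
        Matrix.head_fin_const, Matrix.empty_val', Matrix.cons_val_fin_one,
        Matrix.of_apply]
      refine ⟨⟨?_, ?_⟩, ?_, ?_⟩
      · linear_combination hp
      · linear_combination hq - hx / 2
      · linear_combination hr + hx / 2
      · linear_combination hs
    · intro h
      rw [SetLike.mem_coe, Submodule.mem_span_singleton] at h
      obtain ⟨t, rfl⟩ := h
      constructor
      · rw [← Matrix.ext_iff]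
        simp only [hM, Fin.forall_fin_two, Matrix.mul_apply, Fin.sum_univ_two,
          Matrix.det_fin_two, Matrix.smul_apply, smul_eq_mul, Matrix.transpose_apply,
          Matrix.cons_val', Matrix.cons_val_zero, Matrix.cons_val_one, Matrix.head_cons,
          Matrix.head_fin_const, Matrix.empty_val', Matrix.cons_val_fin_one,
          Matrix.of_apply]
        refine ⟨⟨?_, ?_⟩, ?_, ?_⟩ <;> ring
      · rw [← Matrix.ext_iff]
        simp only [hM, Fin.forall_fin_two, Matrix.transpose_apply, Matrix.smul_apply,
          smul_eq_mul, Matrix.cons_val', Matrix.cons_val_zero, Matrix.cons_val_one,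
          Matrix.head_cons, Matrix.head_fin_const, Matrix.empty_val',
          Matrix.cons_val_fin_one, Matrix.of_apply]
        tauto
  have hpart3 : Module.rank ℚ
      ↥(Submodule.span ℚ
        {P : Matrix (Fin 2) (Fin 2) ℚ | A.transpose * P * A = A.det • P ∧ P.transpose = P})
      = 1 := by
    rw [hset3, Submodule.span_eq, ← Module.finrank_eq_rank, finrank_span_singleton hM0]
    simp
  exact ⟨hpart1, hpart2, hpart3⟩
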